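/- In the concrete quasi-free CAR model: let l ∈ ℤ with λ_l ≠ 1/2 and let ξ ∈ H satisfy the l-th intertwining equations. Then for all finite subsets A, B ⊆ ℤ such that exactly one of the conditions l ∈ A, l ∈ B holds, one has ⟨e_{(A,B)}, ξ⟩ = 0. (The coefficient functions u₁₀ and u₀₁ in the l-decomposition of ξ vanish identically.) -/

import Mathlib

/- The concrete quasi-free CAR model: `H = ℓ²(Finset ℤ × Finset ℤ)` with orthonormal basis
`e (A, B)`, vacuum `Ω = e (∅, ∅)`, and operators `a l`, `b l`, `G` given on the basis by the
quasi-free formulas with symbol `λ` (diagonal, `R h_l = λ_l h_l`). -/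

noncomputable section

/-- The GNS Hilbert space: `ℓ²` over pairs of finite subsets of `ℤ`. -/
abbrev CARSpace := lp (fun _ : Finset ℤ × Finset ℤ => ℂ) 2

/-- The orthonormal basis vector `e_{(A,B)}`. -/
def carE (p : Finset ℤ × Finset ℤ) : CARSpace := lp.single 2 p 1

/-- The vacuum vector `Ω = e_{(∅,∅)}`. -/
def carΩ : CARSpace := carE (∅, ∅)

/-- `n(l, X)` = number of elements of `X` strictly below `l`. -/
def nlt (l : ℤ) (X : Finset ℤ) : ℕ := (X.filter fun j => j < l).card

/-- `a` is the family of quasi-free annihilation-type operators `a_l = π_R(a(h_l))`: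
`a_l e_{(A,B)} = √(1−λ_l)·(−1)^{|B|}·(−1)^{n(l,A)}·[l ∉ A]·e_{(A∪{l},B)}
              + √(λ_l)·(−1)^{n(l,B)}·[l ∈ B]·e_{(A,B∖{l})}`. -/
def IsCAR_a (lam : ℤ → ℝ) (a : ℤ → CARSpace →L[ℂ] CARSpace) : Prop :=
  ∀ (l : ℤ) (A B : Finset ℤ),
    a l (carE (A, B)) =
      ((Real.sqrt (1 - lam l) : ℂ) * (-1) ^ B.card * (-1) ^ nlt l A *
          (if l ∈ A then 0 else 1)) • carE (insert l A, B) +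
      ((Real.sqrt (lam l) : ℂ) * (-1) ^ nlt l B *
          (if l ∈ B then 1 else 0)) • carE (A, B.erase l)

/-- `b` is the family of commutant quasi-free operators:
`b_l e_{(A,B)} = √(λ_l)·(−1)^{|B|}·(−1)^{n(l,A)}·[l ∉ A]·e_{(A∪{l},B)}
              − √(1−λ_l)·(−1)^{n(l,B)}·[l ∈ B]·e_{(A,B∖{l})}`. -/
def IsCAR_b (lam : ℤ → ℝ) (b : ℤ → CARSpace →L[ℂ] CARSpace) : Prop :=
  ∀ (l : ℤ) (A B : Finset ℤ),
    b l (carE (A, B)) =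
      ((Real.sqrt (lam l) : ℂ) * (-1) ^ B.card * (-1) ^ nlt l A *
          (if l ∈ A then 0 else 1)) • carE (insert l A, B) -
      ((Real.sqrt (1 - lam l) : ℂ) * (-1) ^ nlt l B *
          (if l ∈ B then 1 else 0)) • carE (A, B.erase l)

/-- `G = Γ⊗Γ` : `G e_{(A,B)} = (−1)^{|A|+|B|} e_{(A,B)}`. -/
def IsCAR_G (G : CARSpace →L[ℂ] CARSpace) : Prop :=
  ∀ (A B : Finset ℤ), G (carE (A, B)) = ((-1 : ℂ) ^ (A.card + B.card)) • carE (A, B)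

/-- `ξ` satisfies the `l`-th intertwining equations:
`(1−λ_l)^{−1/2}·(a_l ξ) = −λ_l^{−1/2}·G(b_l ξ)` and
`λ_l^{−1/2}·(a_l* ξ) = −(1−λ_l)^{−1/2}·b_l*(G ξ)`. -/
def IntertwinesAt (lam : ℤ → ℝ) (a b : ℤ → CARSpace →L[ℂ] CARSpace)
    (G : CARSpace →L[ℂ] CARSpace) (l : ℤ) (ξ : CARSpace) : Prop :=
  (Real.sqrt (1 - lam l) : ℂ)⁻¹ • a l ξ = -((Real.sqrt (lam l) : ℂ)⁻¹) • G (b l ξ) ∧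
  (Real.sqrt (lam l) : ℂ)⁻¹ • (star (a l)) ξ =
    -((Real.sqrt (1 - lam l) : ℂ)⁻¹) • (star (b l)) (G ξ)

local notation "⟪" x ", " y "⟫" => @inner ℂ _ _ x y


lemma inner_carE (p : Finset ℤ × Finset ℤ) (x : CARSpace) : ⟪carE p, x⟫ = x p := by
  rw [carE, lp.inner_single_left]; simp [RCLike.inner_apply]


lemma carE_apply (p q : Finset ℤ × Finset ℤ) : (carE p : ∀ _, ℂ) q = if q = p then 1 else 0 := by
  rw [carE, lp.single_apply]; split_ifs with h <;> simp [h]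


lemma inner_carE_carE (p q : Finset ℤ × Finset ℤ) :
    ⟪carE p, carE q⟫ = if q = p then 1 else 0 := by
  rw [inner_carE, carE_apply]
  simp [eq_comm]


lemma carE_ext {x y : CARSpace} (h : ∀ q, ⟪carE q, x⟫ = ⟪carE q, y⟫) : x = y := by
  apply lp.ext; funext q
  have := h q; rwa [inner_carE, inner_carE] at this


lemma nlt_insert_self (l : ℤ) (B : Finset ℤ) : nlt l (insert l B) = nlt l B := by
  unfold nlt
  rw [Finset.filter_insert, if_neg (lt_irrefl l)]

lemma adjA (lam : ℤ → ℝ) (a : ℤ → CARSpace →L[ℂ] CARSpace) (ha : IsCAR_a lam a)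
    (l : ℤ) (A B : Finset ℤ) (hA : l ∉ A) (hB : l ∉ B) :
    ContinuousLinearMap.adjoint (a l) (carE (A, B)) =
      ((Real.sqrt (lam l) : ℂ) * (-1) ^ nlt l B) • carE (A, insert l B) := by
  apply carE_ext
  rintro ⟨C, D⟩
  rw [ContinuousLinearMap.adjoint_inner_right, ha l C D, inner_add_left, inner_smul_left,
    inner_smul_left, inner_carE_carE, inner_carE_carE, inner_smul_right, inner_carE_carE]
  have h1 : ¬((A, B) = (insert l C, D)) := by
    simp only [Prod.mk.injEq, not_and]
    rintro rfl; exact absurd (Finset.mem_insert_self l C) hA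
  rw [if_neg h1, mul_zero, zero_add]
  by_cases hC : C = A
  · subst hC
    by_cases hD : l ∈ D
    · have h2 : ((C, B) = (C, D.erase l)) ↔ ((C, insert l B) = (C, D)) := by
        simp only [Prod.mk.injEq, true_and]
        constructor
        · rintro rfl; rw [Finset.insert_erase hD]
        · rintro rfl; rw [Finset.erase_insert hB]
      by_cases h3 : (C, insert l B) = (C, D)
      · rw [if_pos h3, if_pos (h2.mpr h3)]
        have hDB : D = insert l B := by
          have := h3; simp only [Prod.mk.injEq, true_and] at this
          exact this.symm
        subst hDB
        simp [nlt_insert_self, Complex.conj_ofReal, map_pow, hD]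
      · rw [if_neg h3, if_neg (fun h => h3 (h2.mp h)), mul_zero, mul_zero]
    · have h3 : ¬((C, insert l B) = (C, D)) := by
        simp only [Prod.mk.injEq, true_and]
        rintro rfl; exact hD (Finset.mem_insert_self l B)
      rw [if_neg h3, mul_zero, if_neg hD]
      simp
  · have h4 : ¬((A, B) = (C, D.erase l)) := by
      simp only [Prod.mk.injEq, not_and]; rintro rfl; exact absurd rfl hC
    have h5 : ¬((A, insert l B) = (C, D)) := by
      simp only [Prod.mk.injEq, not_and]; rintro rfl; exact absurd rfl hC
    rw [if_neg h4, if_neg h5, mul_zero, mul_zero]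

lemma adjB (lam : ℤ → ℝ) (b : ℤ → CARSpace →L[ℂ] CARSpace) (hb : IsCAR_b lam b)
    (l : ℤ) (A B : Finset ℤ) (hA : l ∉ A) (hB : l ∉ B) :
    ContinuousLinearMap.adjoint (b l) (carE (A, B)) =
      (-((Real.sqrt (1 - lam l) : ℂ) * (-1) ^ nlt l B)) • carE (A, insert l B) := by
  apply carE_ext
  rintro ⟨C, D⟩
  rw [ContinuousLinearMap.adjoint_inner_right, hb l C D, inner_sub_left, inner_smul_left,
    inner_smul_left, inner_carE_carE, inner_carE_carE, inner_smul_right, inner_carE_carE]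
  have h1 : ¬((A, B) = (insert l C, D)) := by
    simp only [Prod.mk.injEq, not_and]
    rintro rfl; exact absurd (Finset.mem_insert_self l C) hA
  rw [if_neg h1, mul_zero, zero_sub]
  by_cases hC : C = A
  · subst hC
    by_cases hD : l ∈ D
    · have h2 : ((C, B) = (C, D.erase l)) ↔ ((C, insert l B) = (C, D)) := by
        simp only [Prod.mk.injEq, true_and]
        constructor
        · rintro rfl; rw [Finset.insert_erase hD]
        · rintro rfl; rw [Finset.erase_insert hB]
      by_cases h3 : (C, insert l B) = (C, D)
      · rw [if_pos h3, if_pos (h2.mpr h3)]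
        have hDB : D = insert l B := by
          have := h3; simp only [Prod.mk.injEq, true_and] at this
          exact this.symm
        subst hDB
        simp [nlt_insert_self, Complex.conj_ofReal, map_pow, hD]
      · rw [if_neg h3, if_neg (fun h => h3 (h2.mp h)), mul_zero, mul_zero, neg_zero]
    · have h3 : ¬((C, insert l B) = (C, D)) := by
        simp only [Prod.mk.injEq, true_and]
        rintro rfl; exact hD (Finset.mem_insert_self l B)
      rw [if_neg h3, mul_zero, if_neg hD]
      simp
  · have h4 : ¬((A, B) = (C, D.erase l)) := by
      simp only [Prod.mk.injEq, not_and]; rintro rfl; exact absurd rfl hC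
    have h5 : ¬((A, insert l B) = (C, D)) := by
      simp only [Prod.mk.injEq, not_and]; rintro rfl; exact absurd rfl hC
    rw [if_neg h4, if_neg h5, mul_zero, mul_zero, neg_zero]


lemma adjG (G : CARSpace →L[ℂ] CARSpace) (hG : IsCAR_G G) (A B : Finset ℤ) :
    ContinuousLinearMap.adjoint G (carE (A, B)) = ((-1 : ℂ) ^ (A.card + B.card)) • carE (A, B) := by
  apply carE_ext
  rintro ⟨C, D⟩
  rw [ContinuousLinearMap.adjoint_inner_right, hG C D, inner_smul_left, inner_carE_carE,
    inner_smul_right, inner_carE_carE]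
  by_cases h : (A, B) = (C, D)
  · obtain ⟨rfl, rfl⟩ : A = C ∧ B = D := by simpa [Prod.mk.injEq] using h
    simp
  · rw [if_neg h, mul_zero, mul_zero]

section
variable (lam : ℤ → ℝ) (hlam : ∀ l, 0 < lam l ∧ lam l < 1)
    (a b : ℤ → CARSpace →L[ℂ] CARSpace) (G : CARSpace →L[ℂ] CARSpace)
    (ha : IsCAR_a lam a) (hb : IsCAR_b lam b) (hG : IsCAR_G G)
    (l : ℤ) (hl : lam l ≠ 1 / 2)
    (ξ : CARSpace) (hξ : IntertwinesAt lam a b G l ξ)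

include hlam ha hb hG hl hξ in
lemma key1 (A B : Finset ℤ) (hA : l ∉ A) (hB : l ∉ B) :
    ⟪carE (A, insert l B), ξ⟫ = 0 := by
  set s : ℝ := Real.sqrt (lam l) with hs_def
  set t : ℝ := Real.sqrt (1 - lam l) with ht_def
  have hs0 : 0 < s := Real.sqrt_pos.mpr (hlam l).1
  have ht0 : 0 < t := Real.sqrt_pos.mpr (by linarith [(hlam l).2])
  have hs : (s : ℂ) ≠ 0 := by exact_mod_cast hs0.ne'
  have ht : (t : ℂ) ≠ 0 := by exact_mod_cast ht0.ne'
  have hss : (s : ℂ) * s = (lam l : ℂ) := by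
    rw [← Complex.ofReal_mul, ← Real.mul_self_sqrt (hlam l).1.le]
  have htt : (t : ℂ) * t = ((1 - lam l : ℝ) : ℂ) := by
    rw [← Complex.ofReal_mul, ← Real.mul_self_sqrt (by linarith [(hlam l).2] : (0:ℝ) ≤ 1 - lam l)]
  set Y := ⟪carE (A, insert l B), ξ⟫ with hY_def
  have h := congrArg (fun x => ⟪carE (A, B), x⟫) hξ.1
  simp only [inner_smul_right] at h
  rw [← ContinuousLinearMap.adjoint_inner_left (a l), adjA lam a ha l A B hA hB,
    ← ContinuousLinearMap.adjoint_inner_left G, adjG G hG A B,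
    ← ContinuousLinearMap.adjoint_inner_left (b l), map_smul,
    adjB lam b hb l A B hA hB, smul_smul] at h
  simp only [inner_smul_left, map_mul, map_pow, map_neg, map_one, Complex.conj_ofReal] at h
  -- now h is a scalar equation
  by_cases hpar : Even (A.card + B.card)
  · rw [hpar.neg_one_pow] at h
    have hcoef : ((s : ℂ) * s - (t : ℂ) * t) ≠ 0 := by
      rw [hss, htt, ← Complex.ofReal_sub]
      simp only [ne_eq, Complex.ofReal_eq_zero]
      intro hcon; apply hl; linarith
    have h2 : ((s : ℂ) * s - (t : ℂ) * t) * ((-1) ^ nlt l B * Y) = 0 := by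
      field_simp at h
      have h' : (s : ℂ) * Y / t = t * Y / s := h
      have e1 : (s : ℂ) * Y / t * t = s * Y := div_mul_cancel₀ _ ht
      have e2 : (t : ℂ) * Y / s * s = t * Y := div_mul_cancel₀ _ hs
      linear_combination (-1 : ℂ) ^ nlt l B * ((s : ℂ) * t * h' - (s : ℂ) * e1 + (t : ℂ) * e2)
    rcases mul_eq_zero.mp h2 with h3 | h3
    · exact absurd h3 hcoef
    · rcases mul_eq_zero.mp h3 with h4 | h4
      · exact absurd h4 (pow_ne_zero _ (by norm_num))
      · exact h4
  · rw [(Nat.not_even_iff_odd.mp hpar).neg_one_pow] at h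
    have hcoef : ((s : ℂ) * s + (t : ℂ) * t) ≠ 0 := by
      rw [hss, htt, ← Complex.ofReal_add]
      norm_num
    have h2 : ((s : ℂ) * s + (t : ℂ) * t) * ((-1) ^ nlt l B * Y) = 0 := by
      field_simp at h
      have h' : (s : ℂ) * Y / t = -(t * Y / s) := h
      have e1 : (s : ℂ) * Y / t * t = s * Y := div_mul_cancel₀ _ ht
      have e2 : (t : ℂ) * Y / s * s = t * Y := div_mul_cancel₀ _ hs
      linear_combination (-1 : ℂ) ^ nlt l B * ((s : ℂ) * t * h' - (s : ℂ) * e1 - (t : ℂ) * e2)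
    rcases mul_eq_zero.mp h2 with h3 | h3
    · exact absurd h3 hcoef
    · rcases mul_eq_zero.mp h3 with h4 | h4
      · exact absurd h4 (pow_ne_zero _ (by norm_num))
      · exact h4
include hlam ha hb hG hl hξ in
lemma key2 (A B : Finset ℤ) (hA : l ∉ A) (hB : l ∉ B) :
    ⟪carE (insert l A, B), ξ⟫ = 0 := by
  set s : ℝ := Real.sqrt (lam l) with hs_def
  set t : ℝ := Real.sqrt (1 - lam l) with ht_def
  have hs0 : 0 < s := Real.sqrt_pos.mpr (hlam l).1
  have ht0 : 0 < t := Real.sqrt_pos.mpr (by linarith [(hlam l).2])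
  have hs : (s : ℂ) ≠ 0 := by exact_mod_cast hs0.ne'
  have ht : (t : ℂ) ≠ 0 := by exact_mod_cast ht0.ne'
  have hss : (s : ℂ) * s = (lam l : ℂ) := by
    rw [← Complex.ofReal_mul, ← Real.mul_self_sqrt (hlam l).1.le]
  have htt : (t : ℂ) * t = ((1 - lam l : ℝ) : ℂ) := by
    rw [← Complex.ofReal_mul, ← Real.mul_self_sqrt (by linarith [(hlam l).2] : (0:ℝ) ≤ 1 - lam l)]
  set X := ⟪carE (insert l A, B), ξ⟫ with hX_def
  have h := congrArg (fun x => ⟪carE (A, B), x⟫) hξ.2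
  simp only [inner_smul_right, ContinuousLinearMap.star_eq_adjoint] at h
  rw [ContinuousLinearMap.adjoint_inner_right (a l), ha l A B,
    ContinuousLinearMap.adjoint_inner_right (b l), hb l A B] at h
  simp only [if_neg hA, if_neg hB, mul_zero, mul_one, zero_smul, add_zero, sub_zero] at h
  rw [inner_smul_left, inner_smul_left, ← ContinuousLinearMap.adjoint_inner_left G,
    adjG G hG (insert l A) B, inner_smul_left, Finset.card_insert_of_notMem hA] at h
  simp only [map_mul, map_pow, map_neg, map_one, Complex.conj_ofReal] at h
  have hpow : ((-1 : ℂ)) ^ (A.card + 1 + B.card) = -((-1 : ℂ)) ^ (A.card + B.card) := by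
    rw [show A.card + 1 + B.card = (A.card + B.card) + 1 from by omega, pow_succ]
    ring
  rw [hpow] at h
  by_cases hpar : Even (A.card + B.card)
  · rw [hpar.neg_one_pow] at h
    have hcoef : ((t : ℂ) * t - (s : ℂ) * s) ≠ 0 := by
      rw [hss, htt, ← Complex.ofReal_sub]
      simp only [ne_eq, Complex.ofReal_eq_zero]
      intro hcon; apply hl; linarith
    have h2 : ((t : ℂ) * t - (s : ℂ) * s) * ((-1) ^ B.card * (-1) ^ nlt l A * X) = 0 := by
      field_simp at h
      have h' : (t : ℂ) * X / s = s * X / t := h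
      have e1 : (t : ℂ) * X / s * s = t * X := div_mul_cancel₀ _ hs
      have e2 : (s : ℂ) * X / t * t = s * X := div_mul_cancel₀ _ ht
      linear_combination (-1 : ℂ) ^ B.card * (-1 : ℂ) ^ nlt l A *
        ((s : ℂ) * t * h' - (t : ℂ) * e1 + (s : ℂ) * e2)
    rcases mul_eq_zero.mp h2 with h3 | h3
    · exact absurd h3 hcoef
    · rcases mul_eq_zero.mp h3 with h4 | h4
      · rcases mul_eq_zero.mp h4 with h5 | h5 <;>
          exact absurd h5 (pow_ne_zero _ (by norm_num))
      · exact h4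
  · rw [(Nat.not_even_iff_odd.mp hpar).neg_one_pow] at h
    have hcoef : ((t : ℂ) * t + (s : ℂ) * s) ≠ 0 := by
      rw [hss, htt, ← Complex.ofReal_add]
      norm_num
    have h2 : ((t : ℂ) * t + (s : ℂ) * s) * ((-1) ^ B.card * (-1) ^ nlt l A * X) = 0 := by
      field_simp at h
      have h' : (t : ℂ) * X / s = -(s * X / t) := h
      have e1 : (t : ℂ) * X / s * s = t * X := div_mul_cancel₀ _ hs
      have e2 : (s : ℂ) * X / t * t = s * X := div_mul_cancel₀ _ ht
      linear_combination (-1 : ℂ) ^ B.card * (-1 : ℂ) ^ nlt l A *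
        ((s : ℂ) * t * h' - (t : ℂ) * e1 - (s : ℂ) * e2)
    rcases mul_eq_zero.mp h2 with h3 | h3
    · exact absurd h3 hcoef
    · rcases mul_eq_zero.mp h3 with h4 | h4
      · rcases mul_eq_zero.mp h4 with h5 | h5 <;>
          exact absurd h5 (pow_ne_zero _ (by norm_num))
      · exact h4
end

/-- let `l ∈ ℤ` with `λ_l ≠ 1/2` and let `ξ ∈ H` satisfy the `l`-th
intertwining equations. Then for all finite `A, B ⊆ ℤ` such that exactly one of `l ∈ A`,
`l ∈ B` holds, one has `⟨e_{(A,B)}, ξ⟩ = 0`. -/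
theorem stmt13 (lam : ℤ → ℝ) (hlam : ∀ l, 0 < lam l ∧ lam l < 1)
    (a b : ℤ → CARSpace →L[ℂ] CARSpace) (G : CARSpace →L[ℂ] CARSpace)
    (ha : IsCAR_a lam a) (hb : IsCAR_b lam b) (hG : IsCAR_G G)
    (l : ℤ) (hl : lam l ≠ 1 / 2)
    (ξ : CARSpace) (hξ : IntertwinesAt lam a b G l ξ) :
    ∀ A B : Finset ℤ, Xor' (l ∈ A) (l ∈ B) → ⟪carE (A, B), ξ⟫ = 0 := by
  intro A B hx
  rcases hx with ⟨hA, hB⟩ | ⟨hB, hA⟩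
  · rw [← Finset.insert_erase hA]
    exact key2 lam hlam a b G ha hb hG l hl ξ hξ (A.erase l) B (Finset.notMem_erase l A) hB
  · rw [← Finset.insert_erase hB]
    exact key1 lam hlam a b G ha hb hG l hl ξ hξ A (B.erase l) hA (Finset.notMem_erase l B)

end
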